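/- Identity property: let p be a probability mass function on 𝒳 × 𝒴 and let Z = (X,Y) be the copy of the pair, i.e. the joint distribution on 𝒳 × 𝒴 × (𝒳×𝒴) given by p̂(x,y,(x',y')) = p(x,y)·1[(x',y') = (x,y)]. Then I_pr(X↘Y;Z) = I_pr(Y↘X;Z) = I(X;Y), and hence I_red((X,Y);X,Y) = I(X;Y). -/

import Mathlib

open scoped BigOperators

/-- `p` is a probability mass function on a finite type. -/
def IsPMF {α : Type*} [Fintype α] (p : α → ℝ) : Prop :=
  (∀ a, 0 ≤ p a) ∧ ∑ a, p a = 1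

/-- Kullback–Leibler divergence `D(u‖v) = Σ u log (u/v)` (with the convention `0 log 0 = 0`),
`⊤` if absolute continuity fails, i.e. if `u a > 0 = v a` for some `a`. -/
noncomputable def klDiv {α : Type*} [Fintype α] (u v : α → ℝ) : EReal :=
  if ∀ a, 0 < u a → 0 < v a then ((∑ a, u a * Real.log (u a / v a) : ℝ) : EReal) else ⊤

variable {𝓧 𝓨 𝓩 : Type*} [Fintype 𝓧] [Fintype 𝓨] [Fintype 𝓩]

/-- Marginal distribution of the first variable `X`. -/
noncomputable def margX (p : 𝓧 × 𝓨 × 𝓩 → ℝ) (x : 𝓧) : ℝ := ∑ y, ∑ z, p (x, y, z)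

/-- Marginal distribution of the second variable `Y`. -/
noncomputable def margY (p : 𝓧 × 𝓨 × 𝓩 → ℝ) (y : 𝓨) : ℝ := ∑ x, ∑ z, p (x, y, z)

/-- Marginal distribution of the third variable `Z`. -/
noncomputable def margZ (p : 𝓧 × 𝓨 × 𝓩 → ℝ) (z : 𝓩) : ℝ := ∑ x, ∑ y, p (x, y, z)

/-- Joint marginal `p(x,z)`. -/
noncomputable def margXZ (p : 𝓧 × 𝓨 × 𝓩 → ℝ) (x : 𝓧) (z : 𝓩) : ℝ := ∑ y, p (x, y, z)

/-- Joint marginal `p(y,z)`. -/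
noncomputable def margYZ (p : 𝓧 × 𝓨 × 𝓩 → ℝ) (y : 𝓨) (z : 𝓩) : ℝ := ∑ x, p (x, y, z)

/-- Joint marginal `p(x,y)`. -/
noncomputable def margXY (p : 𝓧 × 𝓨 × 𝓩 → ℝ) (x : 𝓧) (y : 𝓨) : ℝ := ∑ z, p (x, y, z)

/-- Conditional distribution `p(·|x)` of `Z` given `X = x`. -/
noncomputable def condX (p : 𝓧 × 𝓨 × 𝓩 → ℝ) (x : 𝓧) : 𝓩 → ℝ :=
  fun z => margXZ p x z / margX p x

/-- Conditional distribution `p(·|y)` of `Z` given `Y = y`. -/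
noncomputable def condY (p : 𝓧 × 𝓨 × 𝓩 → ℝ) (y : 𝓨) : 𝓩 → ℝ :=
  fun z => margYZ p y z / margY p y

/-- Conditional distribution `p(·|x,y)` of `Z` given `(X,Y) = (x,y)`. -/
noncomputable def condXY (p : 𝓧 × 𝓨 × 𝓩 → ℝ) (x : 𝓧) (y : 𝓨) : 𝓩 → ℝ :=
  fun z => p (x, y, z) / margXY p x y

/-- `C_X`: the convex hull of the conditionals `{p(·|x) : p(x) > 0}`. -/
noncomputable def CXhull (p : 𝓧 × 𝓨 × 𝓩 → ℝ) : Set (𝓩 → ℝ) :=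
  convexHull ℝ {q | ∃ x, 0 < margX p x ∧ q = condX p x}

/-- `C_Y`: the convex hull of the conditionals `{p(·|y) : p(y) > 0}`. -/
noncomputable def CYhull (p : 𝓧 × 𝓨 × 𝓩 → ℝ) : Set (𝓩 → ℝ) :=
  convexHull ℝ {q | ∃ y, 0 < margY p y ∧ q = condY p y}

/-- Mutual information `I(Z;X)` (terms with `p(x,z) = 0` vanish). -/
noncomputable def miZX (p : 𝓧 × 𝓨 × 𝓩 → ℝ) : ℝ :=
  ∑ x, ∑ z, margXZ p x z * Real.log (margXZ p x z / (margX p x * margZ p z))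

/-- Mutual information `I(Z;Y)`. -/
noncomputable def miZY (p : 𝓧 × 𝓨 × 𝓩 → ℝ) : ℝ :=
  ∑ y, ∑ z, margYZ p y z * Real.log (margYZ p y z / (margY p y * margZ p z))

/-- Mutual information `I(Z;X,Y)` between `Z` and the joint variable `(X,Y)`. -/
noncomputable def miZXY (p : 𝓧 × 𝓨 × 𝓩 → ℝ) : ℝ :=
  ∑ x, ∑ y, ∑ z, p (x, y, z) * Real.log (p (x, y, z) / (margXY p x y * margZ p z))

/-- Projected information `I_pr(X ↘ Y; Z) =
`Σ_{x : p(x)>0} p(x)·[D(p(·|x)‖p_Z) − inf_{q ∈ C_Y} D(p(·|x)‖q)]`. -/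
noncomputable def IprXY (p : 𝓧 × 𝓨 × 𝓩 → ℝ) : ℝ :=
  ∑ x, if 0 < margX p x then
      margX p x * ((klDiv (condX p x) (margZ p)).toReal -
        (⨅ q ∈ CYhull p, klDiv (condX p x) q).toReal)
    else 0

/-- Projected information `I_pr(Y ↘ X; Z)`. -/
noncomputable def IprYX (p : 𝓧 × 𝓨 × 𝓩 → ℝ) : ℝ :=
  ∑ y, if 0 < margY p y then
      margY p y * ((klDiv (condY p y) (margZ p)).toReal -
        (⨅ q ∈ CXhull p, klDiv (condY p y) q).toReal)
    else 0

/-- Redundant information `I_red(Z;X,Y) = min {I_pr(X↘Y;Z), I_pr(Y↘X;Z)}`. -/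
noncomputable def Ired (p : 𝓧 × 𝓨 × 𝓩 → ℝ) : ℝ := min (IprXY p) (IprYX p)

/-- Marginal `p(x)` of a bivariate pmf. -/
noncomputable def marg2X {𝓧 𝓨 : Type*} [Fintype 𝓧] [Fintype 𝓨] (p : 𝓧 × 𝓨 → ℝ) (x : 𝓧) : ℝ :=
  ∑ y, p (x, y)

/-- Marginal `p(y)` of a bivariate pmf. -/
noncomputable def marg2Y {𝓧 𝓨 : Type*} [Fintype 𝓧] [Fintype 𝓨] (p : 𝓧 × 𝓨 → ℝ) (y : 𝓨) : ℝ :=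
  ∑ x, p (x, y)

/-- Mutual information `I(X;Y)` of a bivariate pmf. -/
noncomputable def miXY2 {𝓧 𝓨 : Type*} [Fintype 𝓧] [Fintype 𝓨] (p : 𝓧 × 𝓨 → ℝ) : ℝ :=
  ∑ x, ∑ y, p (x, y) * Real.log (p (x, y) / (marg2X p x * marg2Y p y))

/-- The copy joint `p̂` on `𝓧 × 𝓨 × (𝓧 × 𝓨)`: `p̂(x,y,(x',y')) = p(x,y)·1[(x',y') = (x,y)]`. -/
noncomputable def copyJoint {𝓧 𝓨 : Type*} [DecidableEq 𝓧] [DecidableEq 𝓨]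
    (p : 𝓧 × 𝓨 → ℝ) : 𝓧 × 𝓨 × (𝓧 × 𝓨) → ℝ :=
  fun t => if t.2.2 = (t.1, t.2.1) then p (t.1, t.2.1) else 0


section Aux

variable {𝓧 𝓨 : Type*} [Fintype 𝓧] [Fintype 𝓨] [DecidableEq 𝓧] [DecidableEq 𝓨]

lemma margX_copy (p : 𝓧 × 𝓨 → ℝ) (x : 𝓧) : margX (copyJoint p) x = marg2X p x := by
  simp [margX, copyJoint, marg2X, Finset.sum_ite_eq']

lemma margY_copy (p : 𝓧 × 𝓨 → ℝ) (y : 𝓨) : margY (copyJoint p) y = marg2Y p y := by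
  simp [margY, copyJoint, marg2Y, Finset.sum_ite_eq']

lemma margZ_copy (p : 𝓧 × 𝓨 → ℝ) (z : 𝓧 × 𝓨) : margZ (copyJoint p) z = p z := by
  simp only [margZ, copyJoint, Prod.ext_iff]
  rw [Finset.sum_eq_single z.1, Finset.sum_eq_single z.2] <;>
    simp +contextual [eq_comm]

lemma condX_copy (p : 𝓧 × 𝓨 → ℝ) (x : 𝓧) (z : 𝓧 × 𝓨) :
    condX (copyJoint p) x z = if z.1 = x then p z / marg2X p x else 0 := by
  rcases z with ⟨x', y'⟩
  by_cases h : x' = x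
  · subst h
    simp [condX, margXZ, copyJoint, Prod.ext_iff, margX_copy, Finset.sum_ite_eq']
  · have : ∀ y0 : 𝓨, (if x = x' ∧ y' = y0 then p (x, y0) else 0) = 0 := by
      intro y0
      rw [if_neg]
      rintro ⟨h1, -⟩; exact h h1.symm
    simp [condX, margXZ, copyJoint, Prod.ext_iff, h, this]

lemma condY_copy (p : 𝓧 × 𝓨 → ℝ) (y : 𝓨) (z : 𝓧 × 𝓨) :
    condY (copyJoint p) y z = if z.2 = y then p z / marg2Y p y else 0 := by
  rcases z with ⟨x', y'⟩
  by_cases h : y' = y <;>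
    simp [condY, margYZ, copyJoint, Prod.ext_iff, h, margY_copy, Finset.sum_ite_eq,
      Finset.sum_ite_eq', eq_comm]

end Aux


section Aux2

variable {𝓧 𝓨 : Type*} [Fintype 𝓧] [Fintype 𝓨] [DecidableEq 𝓧] [DecidableEq 𝓨]

lemma gibbs_nonneg {ι : Type*} [Fintype ι] {w l : ι → ℝ}
    (hw0 : ∀ i, 0 ≤ w i) (hl0 : ∀ i, 0 ≤ l i) (hw1 : ∑ i, w i = 1) (hl1 : ∑ i, l i ≤ 1)
    (hwl : ∀ i, 0 < w i → 0 < l i) :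
    0 ≤ ∑ i, w i * Real.log (w i / l i) := by
  have key : ∀ i, w i - l i ≤ w i * Real.log (w i / l i) := by
    intro i
    rcases eq_or_lt_of_le (hw0 i) with h | h
    · simp [← h, hl0 i]
    · have hli := hwl i h
      have hlog1 := Real.log_le_sub_one_of_pos (div_pos hli h)
      have h2 : w i * Real.log (l i / w i) ≤ w i * (l i / w i - 1) :=
        mul_le_mul_of_nonneg_left hlog1 h.le
      have h3 : w i * (l i / w i - 1) = l i - w i := by field_simp
      have h4 : Real.log (w i / l i) = - Real.log (l i / w i) := by
        rw [← Real.log_inv]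
        congr 1
        field_simp
      rw [h4]
      nlinarith
  have h5 : ∑ i, (w i - l i) ≤ ∑ i, w i * Real.log (w i / l i) :=
    Finset.sum_le_sum fun i _ => key i
  rw [Finset.sum_sub_distrib, hw1] at h5
  linarith

lemma klDiv_comp_equiv {α β : Type*} [Fintype α] [Fintype β] (σ : α ≃ β) (u v : β → ℝ) :
    klDiv (fun a => u (σ a)) (fun a => v (σ a)) = klDiv u v := by
  have h1 : (∀ a, 0 < u (σ a) → 0 < v (σ a)) ↔ (∀ b, 0 < u b → 0 < v b) :=
    Equiv.forall_congr σ (fun {a} => Iff.rfl)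
  have h2 : ∑ a, u (σ a) * Real.log (u (σ a) / v (σ a))
      = ∑ b, u b * Real.log (u b / v b) := Fintype.sum_equiv σ _ _ (fun a => rfl)
  unfold klDiv
  rw [h2]
  exact if_congr h1 rfl rfl

lemma p_le_marg2X {p : 𝓧 × 𝓨 → ℝ} (hp : ∀ t, 0 ≤ p t) (x : 𝓧) (y : 𝓨) :
    p (x, y) ≤ marg2X p x :=
  Finset.single_le_sum (fun i _ => hp (x, i)) (Finset.mem_univ y)

lemma p_le_marg2Y {p : 𝓧 × 𝓨 → ℝ} (hp : ∀ t, 0 ≤ p t) (x : 𝓧) (y : 𝓨) :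
    p (x, y) ≤ marg2Y p y :=
  Finset.single_le_sum (fun i _ => hp (i, y)) (Finset.mem_univ x)

lemma marg2Y_nonneg {p : 𝓧 × 𝓨 → ℝ} (hp : ∀ t, 0 ≤ p t) (y : 𝓨) : 0 ≤ marg2Y p y :=
  Finset.sum_nonneg fun i _ => hp (i, y)

lemma CYhull_copy_subset (p : 𝓧 × 𝓨 → ℝ) :
    CYhull (copyJoint p) ⊆ {q : 𝓧 × 𝓨 → ℝ | ∃ l : 𝓨 → ℝ,
      (∀ y, 0 ≤ l y) ∧ (∑ y, l y) = 1 ∧ ∀ z, q z = l z.2 * (p z / marg2Y p z.2)} := by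
  apply convexHull_min
  · rintro q ⟨y0, hy0, rfl⟩
    refine ⟨fun y => if y = y0 then 1 else 0, fun y => by dsimp only; split <;> norm_num, by simp, ?_⟩
    intro z
    rw [condY_copy]
    by_cases h : z.2 = y0 <;> simp [h]
  · intro q1 hq1 q2 hq2 a b ha hb hab
    obtain ⟨l1, h10, h11, h1e⟩ := hq1
    obtain ⟨l2, h20, h21, h2e⟩ := hq2
    refine ⟨fun y => a * l1 y + b * l2 y, fun y => add_nonneg (mul_nonneg ha (h10 y)) (mul_nonneg hb (h20 y)), ?_, ?_⟩
    · rw [Finset.sum_add_distrib, ← Finset.mul_sum, ← Finset.mul_sum, h11, h21]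
      linarith
    · intro z
      simp only [Pi.add_apply, Pi.smul_apply, smul_eq_mul, h1e z, h2e z]
      ring

end Aux2


section Aux3

variable {𝓧 𝓨 : Type*} [Fintype 𝓧] [Fintype 𝓨] [DecidableEq 𝓧] [DecidableEq 𝓨]

/-- The minimizer `q*` in `C_Y`. -/
noncomputable def qstar (p : 𝓧 × 𝓨 → ℝ) (x : 𝓧) : 𝓧 × 𝓨 → ℝ :=
  fun z => p (x, z.2) / marg2X p x * (p z / marg2Y p z.2)

/-- The value of the minimized divergence. -/
noncomputable def Bval (p : 𝓧 × 𝓨 → ℝ) (x : 𝓧) : ℝ :=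
  ∑ y, p (x, y) / marg2X p x * Real.log (marg2Y p y / p (x, y))

lemma sum_fst_eq (p : 𝓧 × 𝓨 → ℝ) (x : 𝓧) (f : 𝓧 × 𝓨 → ℝ) :
    ∑ z : 𝓧 × 𝓨, (if z.1 = x then f z else 0) = ∑ y, f (x, y) := by
  rw [Fintype.sum_prod_type, Finset.sum_eq_single x]
  · simp
  · intro b _ hb; simp [hb]
  · simp

lemma klDiv_condX_margZ (p : 𝓧 × 𝓨 → ℝ) (hp : ∀ t, 0 ≤ p t) {x : 𝓧}
    (hx : 0 < marg2X p x) :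
    klDiv (condX (copyJoint p) x) (margZ (copyJoint p))
      = ((- Real.log (marg2X p x) : ℝ) : EReal) := by
  have hac : ∀ z, 0 < condX (copyJoint p) x z → 0 < margZ (copyJoint p) z := by
    intro z hz
    rw [condX_copy] at hz
    rw [margZ_copy]
    by_cases h : z.1 = x
    · rw [if_pos h] at hz
      rcases eq_or_lt_of_le (hp z) with h0 | h0
      · rw [← h0] at hz; simp at hz
      · exact h0
    · rw [if_neg h] at hz; exact absurd hz (lt_irrefl 0)
  rw [klDiv, if_pos hac]
  congr 1
  have hterm : ∀ z : 𝓧 × 𝓨,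
      condX (copyJoint p) x z * Real.log (condX (copyJoint p) x z / margZ (copyJoint p) z)
      = (if z.1 = x then p z / marg2X p x * (- Real.log (marg2X p x)) else 0) := by
    intro z
    rw [condX_copy, margZ_copy]
    by_cases h : z.1 = x
    · rw [if_pos h, if_pos h]
      rcases eq_or_lt_of_le (hp z) with h0 | h0
      · rw [← h0]; simp
      · have h1 : p z / marg2X p x / p z = (marg2X p x)⁻¹ := by
          field_simp
        rw [h1, Real.log_inv]
    · rw [if_neg h, if_neg h, zero_mul]
  rw [Finset.sum_congr rfl fun z _ => hterm z,
    sum_fst_eq p x (fun z => p z / marg2X p x * (- Real.log (marg2X p x))),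
    ← Finset.sum_mul, ← Finset.sum_div]
  have : (∑ y, p (x, y)) = marg2X p x := rfl
  rw [this, div_self (ne_of_gt hx), one_mul]

lemma klDiv_condX_qstar (p : 𝓧 × 𝓨 → ℝ) (hp : ∀ t, 0 ≤ p t) {x : 𝓧}
    (hx : 0 < marg2X p x) :
    klDiv (condX (copyJoint p) x) (qstar p x) = ((Bval p x : ℝ) : EReal) := by
  have hac : ∀ z, 0 < condX (copyJoint p) x z → 0 < qstar p x z := by
    intro z hz
    rw [condX_copy] at hz
    by_cases h : z.1 = x
    · rw [if_pos h] at hz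
      have hpz : 0 < p z := by
        rcases eq_or_lt_of_le (hp z) with h0 | h0
        · rw [← h0] at hz; simp at hz
        · exact h0
      have hxz : p (x, z.2) = p z := by rw [← h]
      have hpy : 0 < marg2Y p z.2 :=
        lt_of_lt_of_le hpz (by
          have := p_le_marg2Y hp z.1 z.2
          simpa using this)
      unfold qstar
      rw [hxz]
      positivity
    · rw [if_neg h] at hz; exact absurd hz (lt_irrefl 0)
  rw [klDiv, if_pos hac]
  congr 1
  have hterm : ∀ z : 𝓧 × 𝓨,
      condX (copyJoint p) x z * Real.log (condX (copyJoint p) x z / qstar p x z)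
      = (if z.1 = x then p z / marg2X p x * Real.log (marg2Y p z.2 / p z) else 0) := by
    intro z
    rw [condX_copy]
    by_cases h : z.1 = x
    · rw [if_pos h, if_pos h]
      rcases eq_or_lt_of_le (hp z) with h0 | h0
      · rw [← h0]; simp
      · have hxz : p (x, z.2) = p z := by rw [← h]
        have hpy : 0 < marg2Y p z.2 :=
          lt_of_lt_of_le h0 (by have := p_le_marg2Y hp z.1 z.2; simpa using this)
        have h1 : p z / marg2X p x / qstar p x z = marg2Y p z.2 / p z := by
          unfold qstar
          rw [hxz]
          field_simp
        rw [h1]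
    · rw [if_neg h, if_neg h, zero_mul]
  rw [Finset.sum_congr rfl fun z _ => hterm z,
    sum_fst_eq p x (fun z => p z / marg2X p x * Real.log (marg2Y p z.2 / p z))]
  rfl

lemma qstar_mem_CYhull (p : 𝓧 × 𝓨 → ℝ) (hp : ∀ t, 0 ≤ p t) {x : 𝓧}
    (hx : 0 < marg2X p x) : qstar p x ∈ CYhull (copyJoint p) := by
  classical
  set t : Finset 𝓨 := Finset.univ.filter (fun y => 0 < marg2Y p y) with ht
  set w : 𝓨 → ℝ := fun y => p (x, y) / marg2X p x with hw
  have hzero : ∀ y ∉ t, p (x, y) = 0 := by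
    intro y hy
    rw [ht] at hy
    simp only [Finset.mem_filter, Finset.mem_univ, true_and, not_lt] at hy
    exact le_antisymm (le_trans (p_le_marg2Y hp x y) hy) (hp (x, y))
  have hsum : ∑ y ∈ t, w y = 1 := by
    have h1 : ∑ y ∈ t, p (x, y) = ∑ y, p (x, y) := by
      apply Finset.sum_subset (Finset.subset_univ t)
      intro y _ hy
      exact hzero y hy
    rw [hw]
    simp only [← Finset.sum_div, h1]
    exact div_self (ne_of_gt hx)
  have hmem : t.centerMass w (fun y => condY (copyJoint p) y) ∈ CYhull (copyJoint p) := by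
    apply Finset.centerMass_mem_convexHull
    · intro y _
      exact div_nonneg (hp (x, y)) hx.le
    · rw [hsum]; norm_num
    · intro y hy
      refine ⟨y, ?_, rfl⟩
      rw [margY_copy]
      rw [ht] at hy
      simpa using hy
  have heq : t.centerMass w (fun y => condY (copyJoint p) y) = qstar p x := by
    rw [Finset.centerMass, hsum, inv_one, one_smul]
    funext z
    rw [Finset.sum_apply]
    have hterm : ∀ y ∈ t, (w y • condY (copyJoint p) y) z
        = (if z.2 = y then w y * (p z / marg2Y p y) else 0) := by
      intro y _
      rw [Pi.smul_apply, smul_eq_mul, condY_copy]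
      by_cases h : z.2 = y <;> simp [h]
    rw [Finset.sum_congr rfl hterm, Finset.sum_ite_eq t z.2]
    by_cases h : z.2 ∈ t
    · rw [if_pos h]; rfl
    · rw [if_neg h]
      have h2 : marg2Y p z.2 = 0 := by
        rw [ht] at h
        simp only [Finset.mem_filter, Finset.mem_univ, true_and, not_lt] at h
        exact le_antisymm h (marg2Y_nonneg hp z.2)
      unfold qstar
      rw [h2, div_zero, mul_zero]
  rw [← heq]
  exact hmem

end Aux3


section Aux4

variable {𝓧 𝓨 : Type*} [Fintype 𝓧] [Fintype 𝓨] [DecidableEq 𝓧] [DecidableEq 𝓨]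

lemma Bval_le_klDiv (p : 𝓧 × 𝓨 → ℝ) (hp : ∀ t, 0 ≤ p t) {x : 𝓧} (hx : 0 < marg2X p x)
    {q : 𝓧 × 𝓨 → ℝ} (hq : q ∈ CYhull (copyJoint p)) :
    ((Bval p x : ℝ) : EReal) ≤ klDiv (condX (copyJoint p) x) q := by
  obtain ⟨l, hl0, hl1, hle⟩ := CYhull_copy_subset p hq
  by_cases hac : ∀ z, 0 < condX (copyJoint p) x z → 0 < q z
  · rw [klDiv, if_pos hac, EReal.coe_le_coe_iff]
    set w : 𝓨 → ℝ := fun y => p (x, y) / marg2X p x with hwdef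
    have hwl : ∀ y, 0 < w y → 0 < l y := by
      intro y hy
      have hpxy : 0 < p (x, y) := by
        by_contra hcon
        push_neg at hcon
        have h00 : p (x, y) = 0 := le_antisymm hcon (hp (x, y))
        rw [hwdef] at hy
        simp only [h00, zero_div] at hy
        exact lt_irrefl 0 hy
      have hcond : 0 < condX (copyJoint p) x (x, y) := by
        rw [condX_copy]
        exact lt_of_lt_of_eq (div_pos hpxy hx) (if_pos rfl).symm
      have hqz := hac _ hcond
      rw [hle (x, y)] at hqz
      by_contra hcon
      push_neg at hcon
      have h00 : l y = 0 := le_antisymm hcon (hl0 y)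
      rw [show ((x, y) : 𝓧 × 𝓨).2 = y from rfl, h00, zero_mul] at hqz
      exact lt_irrefl 0 hqz
    have hterm : ∀ z : 𝓧 × 𝓨,
        condX (copyJoint p) x z * Real.log (condX (copyJoint p) x z / q z)
        = (if z.1 = x then
            p z / marg2X p x * Real.log (p z / marg2X p x / l z.2)
              + p z / marg2X p x * Real.log (marg2Y p z.2 / p z)
          else 0) := by
      intro z
      rw [condX_copy, hle z]
      by_cases h : z.1 = x
      · rw [if_pos h, if_pos h]
        rcases eq_or_lt_of_le (hp z) with h0 | h0
        · rw [← h0]; simp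
        · have hxz : p (x, z.2) = p z := by rw [← h]
          have hpy : 0 < marg2Y p z.2 :=
            lt_of_lt_of_le h0 (by have := p_le_marg2Y hp z.1 z.2; simpa using this)
          have hwz : 0 < w z.2 := by
            rw [hwdef]
            simp only [hxz]
            exact div_pos h0 hx
          have hlz : 0 < l z.2 := hwl z.2 hwz
          have hsplit : p z / marg2X p x / (l z.2 * (p z / marg2Y p z.2))
              = (p z / marg2X p x / l z.2) * (marg2Y p z.2 / p z) := by
            field_simp
          rw [hsplit, Real.log_mul (by positivity) (by positivity), mul_add]
      · rw [if_neg h, if_neg h, zero_mul]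
    rw [Finset.sum_congr rfl fun z _ => hterm z,
      sum_fst_eq p x (fun z => p z / marg2X p x * Real.log (p z / marg2X p x / l z.2)
        + p z / marg2X p x * Real.log (marg2Y p z.2 / p z)),
      Finset.sum_add_distrib]
    have hB : (∑ y, p (x, y) / marg2X p x * Real.log (marg2Y p y / p (x, y))) = Bval p x := rfl
    rw [hB]
    have hgibbs : 0 ≤ ∑ y, w y * Real.log (w y / l y) := by
      refine gibbs_nonneg (fun y => div_nonneg (hp (x, y)) hx.le) hl0 ?_ (le_of_eq hl1) hwl
      rw [hwdef]
      simp only [← Finset.sum_div]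
      exact div_self (ne_of_gt hx)
    have hgeq : (∑ y, p (x, y) / marg2X p x * Real.log (p (x, y) / marg2X p x / l y))
        = ∑ y, w y * Real.log (w y / l y) := rfl
    rw [hgeq]
    linarith
  · rw [klDiv, if_neg hac]
    exact le_top

lemma iInf_CYhull (p : 𝓧 × 𝓨 → ℝ) (hp : ∀ t, 0 ≤ p t) {x : 𝓧} (hx : 0 < marg2X p x) :
    (⨅ q ∈ CYhull (copyJoint p), klDiv (condX (copyJoint p) x) q)
      = ((Bval p x : ℝ) : EReal) := by
  apply le_antisymm
  · exact le_trans (iInf₂_le (qstar p x) (qstar_mem_CYhull p hp hx))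
      (le_of_eq (klDiv_condX_qstar p hp hx))
  · exact le_iInf₂ fun q hq => Bval_le_klDiv p hp hx hq

lemma IprXY_copy (p : 𝓧 × 𝓨 → ℝ) (hp : IsPMF p) : IprXY (copyJoint p) = miXY2 p := by
  unfold IprXY miXY2
  refine Finset.sum_congr rfl fun x _ => ?_
  simp only [margX_copy]
  by_cases hx : 0 < marg2X p x
  · rw [if_pos hx, klDiv_condX_margZ p hp.1 hx, iInf_CYhull p hp.1 hx,
      EReal.toReal_coe, EReal.toReal_coe, mul_sub]
    have h1 : marg2X p x * Bval p x = ∑ y, p (x, y) * Real.log (marg2Y p y / p (x, y)) := by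
      rw [Bval, Finset.mul_sum]
      refine Finset.sum_congr rfl fun y _ => ?_
      field_simp
    have h2 : marg2X p x * (- Real.log (marg2X p x))
        = ∑ y, p (x, y) * (- Real.log (marg2X p x)) := by
      rw [← Finset.sum_mul]; rfl
    rw [h1, h2, ← Finset.sum_sub_distrib]
    refine Finset.sum_congr rfl fun y _ => ?_
    rcases eq_or_lt_of_le (hp.1 (x, y)) with h0 | h0
    · rw [← h0]; simp
    · have hpy : 0 < marg2Y p y := lt_of_lt_of_le h0 (p_le_marg2Y hp.1 x y)
      rw [Real.log_div (ne_of_gt hpy) (ne_of_gt h0),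
        Real.log_div (ne_of_gt h0) (ne_of_gt (by positivity : (0:ℝ) < marg2X p x * marg2Y p y)),
        Real.log_mul (ne_of_gt hx) (ne_of_gt hpy)]
      ring
  · rw [if_neg hx]
    have hx0 : marg2X p x = 0 :=
      le_antisymm (not_lt.mp hx) (Finset.sum_nonneg fun y _ => hp.1 (x, y))
    have hz : ∀ y, p (x, y) = 0 := by
      intro y
      exact le_antisymm (hx0 ▸ p_le_marg2X hp.1 x y) (hp.1 (x, y))
    symm
    refine Finset.sum_eq_zero fun y _ => ?_
    rw [hz y, zero_mul]

end Aux4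


section Aux5

variable {𝓧 𝓨 : Type*} [Fintype 𝓧] [Fintype 𝓨] [DecidableEq 𝓧] [DecidableEq 𝓨]

lemma miXY2_swap (p : 𝓧 × 𝓨 → ℝ) :
    miXY2 (fun t : 𝓨 × 𝓧 => p (t.2, t.1)) = miXY2 p := by
  unfold miXY2
  rw [Finset.sum_comm]
  refine Finset.sum_congr rfl fun x _ => Finset.sum_congr rfl fun y _ => ?_
  have h1 : marg2X (fun t : 𝓨 × 𝓧 => p (t.2, t.1)) y = marg2Y p y := rfl
  have h2 : marg2Y (fun t : 𝓨 × 𝓧 => p (t.2, t.1)) x = marg2X p x := rfl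
  rw [h1, h2, mul_comm (marg2Y p y) (marg2X p x)]

lemma IprYX_copy_eq (p : 𝓧 × 𝓨 → ℝ) :
    IprYX (copyJoint p) = IprXY (copyJoint (fun t : 𝓨 × 𝓧 => p (t.2, t.1))) := by
  set q : 𝓨 × 𝓧 → ℝ := fun t => p (t.2, t.1) with hqdef
  set σ : (𝓧 × 𝓨) ≃ (𝓨 × 𝓧) := Equiv.prodComm 𝓧 𝓨 with hσ
  set L : ((𝓨 × 𝓧) → ℝ) →ₗ[ℝ] ((𝓧 × 𝓨) → ℝ) := LinearMap.funLeft ℝ ℝ σ with hL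
  have hmargYq : ∀ x : 𝓧, marg2Y q x = marg2X p x := fun x => rfl
  have hmargXq : ∀ y : 𝓨, marg2X q y = marg2Y p y := fun y => rfl
  have hq : ∀ z : 𝓧 × 𝓨, q (σ z) = p z := by
    intro z
    show p ((σ z).2, (σ z).1) = p z
    rfl
  have f1 : ∀ (y : 𝓨) (z : 𝓧 × 𝓨),
      condY (copyJoint p) y z = condX (copyJoint q) y (σ z) := by
    intro y z
    rw [condY_copy, condX_copy, hq z]
    have : (σ z).1 = z.2 := rfl
    rw [this, hmargXq y]
  have f1' : ∀ (x : 𝓧) (z : 𝓧 × 𝓨),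
      condX (copyJoint p) x z = condY (copyJoint q) x (σ z) := by
    intro x z
    rw [condX_copy, condY_copy, hq z]
    have : (σ z).2 = z.1 := rfl
    rw [this, hmargYq x]
  have f2 : ∀ z : 𝓧 × 𝓨, margZ (copyJoint p) z = margZ (copyJoint q) (σ z) := by
    intro z
    rw [margZ_copy, margZ_copy, hq z]
  have f3 : ∀ y : 𝓨, klDiv (condY (copyJoint p) y) (margZ (copyJoint p))
      = klDiv (condX (copyJoint q) y) (margZ (copyJoint q)) := by
    intro y
    have e1 : condY (copyJoint p) y = fun z => condX (copyJoint q) y (σ z) :=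
      funext fun z => f1 y z
    have e2 : margZ (copyJoint p) = fun z => margZ (copyJoint q) (σ z) :=
      funext fun z => f2 z
    rw [e1, e2, klDiv_comp_equiv σ]
  have f4 : CXhull (copyJoint p) = L '' CYhull (copyJoint q) := by
    unfold CXhull CYhull
    rw [LinearMap.image_convexHull]
    congr 1
    ext r
    constructor
    · rintro ⟨x, hx, rfl⟩
      refine ⟨condY (copyJoint q) x, ⟨x, ?_, rfl⟩, ?_⟩
      · rw [margY_copy, hmargYq x, ← margX_copy p x]
        exact hx
      · funext z
        rw [hL, LinearMap.funLeft_apply]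
        exact (f1' x z).symm
    · rintro ⟨s, ⟨x, hx, rfl⟩, rfl⟩
      refine ⟨x, ?_, ?_⟩
      · rw [margX_copy]
        rw [margY_copy, hmargYq x] at hx
        exact hx
      · funext z
        rw [hL, LinearMap.funLeft_apply]
        exact (f1' x z).symm
  have f5 : ∀ y : 𝓨,
      (⨅ r ∈ CXhull (copyJoint p), klDiv (condY (copyJoint p) y) r)
        = ⨅ s ∈ CYhull (copyJoint q), klDiv (condX (copyJoint q) y) s := by
    intro y
    rw [f4, iInf_image]
    refine iInf_congr fun s => iInf_congr fun _ => ?_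
    have e1 : condY (copyJoint p) y = fun z => condX (copyJoint q) y (σ z) :=
      funext fun z => f1 y z
    have e2 : L s = fun z => s (σ z) := funext fun z => by rw [hL, LinearMap.funLeft_apply]
    rw [e1, e2, klDiv_comp_equiv σ]
  unfold IprYX IprXY
  refine Finset.sum_congr rfl fun y _ => ?_
  have hmarg : margY (copyJoint p) y = margX (copyJoint q) y := by
    rw [margY_copy, margX_copy, hmargXq y]
  rw [hmarg, f3 y, f5 y]

end Aux5

/-- Identity property: for the copy mechanism `Z = (X,Y)`,
`I_pr(X↘Y;Z) = I_pr(Y↘X;Z) = I(X;Y)`, hence `I_red((X,Y);X,Y) = I(X;Y)`. -/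
theorem identity_property
    {𝓧 𝓨 : Type*} [Fintype 𝓧] [Fintype 𝓨] [DecidableEq 𝓧] [DecidableEq 𝓨]
    [Nonempty 𝓧] [Nonempty 𝓨]
    (p : 𝓧 × 𝓨 → ℝ) (hp : IsPMF p) :
    IprXY (copyJoint p) = miXY2 p ∧
      IprYX (copyJoint p) = miXY2 p ∧
      Ired (copyJoint p) = miXY2 p := by
  have h1 : IprXY (copyJoint p) = miXY2 p := IprXY_copy p hp
  have hq : IsPMF (fun t : 𝓨 × 𝓧 => p (t.2, t.1)) := by
    refine ⟨fun t => hp.1 _, ?_⟩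
    rw [← hp.2]
    exact Fintype.sum_equiv (Equiv.prodComm 𝓨 𝓧) _ _ (fun t => rfl)
  have h2 : IprYX (copyJoint p) = miXY2 p := by
    rw [IprYX_copy_eq p, IprXY_copy _ hq, miXY2_swap]
  exact ⟨h1, h2, by rw [Ired, h1, h2, min_self]⟩
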